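/- Finite-horizon decomposition of the state-option transition path Fisher information matrix. For every horizon T, every ϑ ∈ ℝⁿ, and all indices i, j: (G^T_ϑ)_{ij} = −∑_{t=1}^{T-1} ∑_{s',o} d_t(s',o) · ∂_i ln β(o,s',ϑ) · ∂_j ln β'(o,s',ϑ); that is, the Fisher information matrix of the T-step state–option transition path distribution decomposes as minus the sum over time steps of the marginal-weighted outer products of the termination score ∂ ln β and the continuation score ∂ ln β'. -/

import Mathlib

open scoped Classical

/-- Partial derivative of `f : ℝⁿ → ℝ` with respect to the `i`-th coordinate of `ϑ`. -/
noncomputable def pd {n : ℕ} (i : Fin n) (f : (Fin n → ℝ) → ℝ) (ϑ : Fin n → ℝ) : ℝ :=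
  fderiv ℝ f ϑ (Pi.single i 1)

/-- Option-transition kernel
`K_ϑ(o,s',o') = (1 − β(o,s',ϑ))·𝟙[o' = o] + β(o,s',ϑ)·π_O(s',o')`. -/
noncomputable def optKernel {S O : Type*} [DecidableEq O] {n : ℕ}
    (β : O → S → (Fin n → ℝ) → ℝ) (πO : S → O → ℝ) (ϑ : Fin n → ℝ)
    (o : O) (s' : S) (o' : O) : ℝ :=
  (1 - β o s' ϑ) * (if o' = o then 1 else 0) + β o s' ϑ * πO s' o'

/-- Probability of a state–option transition path
`x' = (o_0, s_1, o_1, s_2, …)`, encoded as `y : Fin (T+1) → O × S` with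
`y t = (o_t, s_{t+1})`:
`Pr(x';ϑ) = d₀(o₀,s₁) · ∏_t K_ϑ(o_t, s_{t+1}, o_{t+1}) · Q(o_{t+1}, s_{t+1}, s_{t+2})`. -/
noncomputable def tPathProb {S O : Type*} [DecidableEq O] {n : ℕ}
    (β : O → S → (Fin n → ℝ) → ℝ) (πO : S → O → ℝ) (Q : O → S → S → ℝ)
    (d0 : O × S → ℝ) (T : ℕ) (ϑ : Fin n → ℝ) (y : Fin (T + 1) → O × S) : ℝ :=
  d0 (y 0)
    * ∏ t : Fin T,
        (optKernel β πO ϑ (y t.castSucc).1 (y t.castSucc).2 (y t.succ).1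
          * Q (y t.succ).1 (y t.castSucc).2 (y t.succ).2)

/-- `T`-step Fisher information matrix of the state–option transition path distribution:
`(G^T_ϑ)_{ij} = ∑_{x' : Pr(x';ϑ)>0} Pr(x';ϑ) ∂_i ln Pr(x';ϑ) ∂_j ln Pr(x';ϑ)`. -/
noncomputable def tPathFisher {S O : Type*} [Fintype S] [Fintype O] [DecidableEq O] {n : ℕ}
    (β : O → S → (Fin n → ℝ) → ℝ) (πO : S → O → ℝ) (Q : O → S → S → ℝ)
    (d0 : O × S → ℝ) (T : ℕ) (ϑ : Fin n → ℝ) (i j : Fin n) : ℝ :=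
  ∑ y ∈ Finset.univ.filter (fun y : Fin (T + 1) → O × S =>
      0 < tPathProb β πO Q d0 T ϑ y),
    tPathProb β πO Q d0 T ϑ y
      * pd i (fun ϑ' => Real.log (tPathProb β πO Q d0 T ϑ' y)) ϑ
      * pd j (fun ϑ' => Real.log (tPathProb β πO Q d0 T ϑ' y)) ϑ

/-- Marginal `d_t(s',o)` within the horizon-`T` path distribution: the probability that
the pair (option active upon arrival, state entered) at step `t` equals `(o, s')`. -/
noncomputable def tMarginalIn {S O : Type*} [Fintype S] [Fintype O] [DecidableEq O]
    [DecidableEq S] {n : ℕ}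
    (β : O → S → (Fin n → ℝ) → ℝ) (πO : S → O → ℝ) (Q : O → S → S → ℝ)
    (d0 : O × S → ℝ) (T : ℕ) (ϑ : Fin n → ℝ) (t : Fin (T + 1)) (s' : S) (o : O) : ℝ :=
  ∑ y ∈ Finset.univ.filter (fun y : Fin (T + 1) → O × S => y t = (o, s')),
    tPathProb β πO Q d0 T ϑ y

section Aux
set_option linter.unusedSectionVars false

variable {S O : Type*} [Fintype S] [Fintype O] [DecidableEq O] [DecidableEq S] {n : ℕ}
variable (β : O → S → (Fin n → ℝ) → ℝ) (πO : S → O → ℝ) (Q : O → S → S → ℝ)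
variable (d0 : O × S → ℝ) (ϑ : Fin n → ℝ)

/-- The score (∂ᵢ log-likelihood) of a transition path, as an explicit formula. -/
noncomputable def sc (i : Fin n) (T : ℕ) (y : Fin (T + 1) → O × S) : ℝ :=
  ∑ t : Fin T,
    (πO (y t.castSucc).2 (y t.succ).1 - if (y t.succ).1 = (y t.castSucc).1 then 1 else 0)
      * pd i (β (y t.castSucc).1 (y t.castSucc).2) ϑ
      / optKernel β πO ϑ (y t.castSucc).1 (y t.castSucc).2 (y t.succ).1

lemma K_pos (hβ0 : ∀ o s ϑ, 0 < β o s ϑ) (hβ1 : ∀ o s ϑ, β o s ϑ < 1)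
    (hπO : ∀ s o, 0 < πO s o) (o : O) (s' : S) (o' : O) :
    0 < optKernel β πO ϑ o s' o' := by
  have hb := hβ0 o s' ϑ; have hb1 := hβ1 o s' ϑ; have hp := hπO s' o'
  unfold optKernel; split_ifs <;> nlinarith

lemma K_sum (hπOsum : ∀ s, ∑ o, πO s o = 1) (o : O) (s' : S) :
    ∑ o', optKernel β πO ϑ o s' o' = 1 := by
  unfold optKernel
  rw [Finset.sum_add_distrib, ← Finset.mul_sum, ← Finset.mul_sum, hπOsum]
  simp

lemma betac_pos (hβ0 : ∀ o s ϑ, 0 < β o s ϑ) (hβ1 : ∀ o s ϑ, β o s ϑ < 1)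
    (hπO : ∀ s o, 0 < πO s o) (o : O) (s' : S) :
    0 < 1 - β o s' ϑ + β o s' ϑ * πO s' o := by
  have hb := hβ0 o s' ϑ; have hb1 := hβ1 o s' ϑ; have hp := hπO s' o
  nlinarith

lemma hasFDerivAt_K (hβsmooth : ∀ o s, ContDiff ℝ 2 (β o s)) (o : O) (s' : S) (o' : O) :
    HasFDerivAt (fun ϑ' => optKernel β πO ϑ' o s' o')
      ((πO s' o' - if o' = o then 1 else 0) • fderiv ℝ (β o s') ϑ) ϑ := by
  have hb : HasFDerivAt (β o s') (fderiv ℝ (β o s') ϑ) ϑ :=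
    (((hβsmooth o s').differentiable (by norm_num)) ϑ).hasFDerivAt
  have hfun : (fun ϑ' => optKernel β πO ϑ' o s' o')
      = fun ϑ' => (if o' = o then (1:ℝ) else 0)
          + (πO s' o' - if o' = o then 1 else 0) * β o s' ϑ' := by
    funext ϑ'; unfold optKernel; ring
  rw [hfun]
  simpa using (hb.const_mul (πO s' o' - if o' = o then (1:ℝ) else 0)).const_add
    (if o' = o then (1:ℝ) else 0)

lemma pd_logK (hβ0 : ∀ o s ϑ, 0 < β o s ϑ) (hβ1 : ∀ o s ϑ, β o s ϑ < 1)
    (hπO : ∀ s o, 0 < πO s o) (hβsmooth : ∀ o s, ContDiff ℝ 2 (β o s))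
    (i : Fin n) (o : O) (s' : S) (o' : O) :
    pd i (fun ϑ' => Real.log (optKernel β πO ϑ' o s' o')) ϑ
      = (πO s' o' - if o' = o then 1 else 0) * pd i (β o s') ϑ
          / optKernel β πO ϑ o s' o' := by
  have h := (hasFDerivAt_K β πO ϑ hβsmooth o s' o').log
    (K_pos β πO ϑ hβ0 hβ1 hπO o s' o').ne'
  rw [pd, h.fderiv]
  simp only [ContinuousLinearMap.coe_smul', Pi.smul_apply, smul_eq_mul, pd]
  ring

lemma pd_logβ (hβ0 : ∀ o s ϑ, 0 < β o s ϑ) (hβsmooth : ∀ o s, ContDiff ℝ 2 (β o s))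
    (i : Fin n) (o : O) (s' : S) :
    pd i (fun ϑ' => Real.log (β o s' ϑ')) ϑ = pd i (β o s') ϑ / β o s' ϑ := by
  have hb : HasFDerivAt (β o s') (fderiv ℝ (β o s') ϑ) ϑ :=
    (((hβsmooth o s').differentiable (by norm_num)) ϑ).hasFDerivAt
  have h := hb.log (hβ0 o s' ϑ).ne'
  rw [pd, h.fderiv]
  simp only [ContinuousLinearMap.coe_smul', Pi.smul_apply, smul_eq_mul, pd]
  ring

lemma pd_logβc (hβ0 : ∀ o s ϑ, 0 < β o s ϑ) (hβ1 : ∀ o s ϑ, β o s ϑ < 1)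
    (hπO : ∀ s o, 0 < πO s o) (hβsmooth : ∀ o s, ContDiff ℝ 2 (β o s))
    (j : Fin n) (o : O) (s' : S) :
    pd j (fun ϑ' => Real.log (1 - β o s' ϑ' + β o s' ϑ' * πO s' o)) ϑ
      = (πO s' o - 1) * pd j (β o s') ϑ
          / (1 - β o s' ϑ + β o s' ϑ * πO s' o) := by
  have hb : HasFDerivAt (β o s') (fderiv ℝ (β o s') ϑ) ϑ :=
    (((hβsmooth o s').differentiable (by norm_num)) ϑ).hasFDerivAt
  have h1 : HasFDerivAt (fun ϑ' => 1 - β o s' ϑ' + β o s' ϑ' * πO s' o)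
      ((πO s' o - 1) • fderiv ℝ (β o s') ϑ) ϑ := by
    have hfun : (fun ϑ' => 1 - β o s' ϑ' + β o s' ϑ' * πO s' o)
        = fun ϑ' => 1 + (πO s' o - 1) * β o s' ϑ' := by funext ϑ'; ring
    rw [hfun]
    simpa using (hb.const_mul (πO s' o - 1)).const_add 1
  have h := h1.log (betac_pos β πO ϑ hβ0 hβ1 hπO o s').ne'
  rw [pd, h.fderiv]
  simp only [ContinuousLinearMap.coe_smul', Pi.smul_apply, smul_eq_mul, pd]
  ring

lemma prob_nonneg (hβ0 : ∀ o s ϑ, 0 < β o s ϑ) (hβ1 : ∀ o s ϑ, β o s ϑ < 1)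
    (hπO : ∀ s o, 0 < πO s o) (hQ : ∀ o s' s'', 0 ≤ Q o s' s'')
    (hd0 : ∀ p, 0 ≤ d0 p) (T : ℕ) (y : Fin (T + 1) → O × S) :
    0 ≤ tPathProb β πO Q d0 T ϑ y := by
  unfold tPathProb
  refine mul_nonneg (hd0 _) (Finset.prod_nonneg fun t _ => mul_nonneg ?_ (hQ _ _ _))
  exact (K_pos β πO ϑ hβ0 hβ1 hπO _ _ _).le

lemma prob_parts_pos (hβ0 : ∀ o s ϑ, 0 < β o s ϑ) (hβ1 : ∀ o s ϑ, β o s ϑ < 1)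
    (hπO : ∀ s o, 0 < πO s o) (hQ : ∀ o s' s'', 0 ≤ Q o s' s'')
    (hd0 : ∀ p, 0 ≤ d0 p) (T : ℕ) (y : Fin (T + 1) → O × S)
    (h : 0 < tPathProb β πO Q d0 T ϑ y) :
    0 < d0 (y 0) ∧ ∀ t : Fin T, 0 < Q (y t.succ).1 (y t.castSucc).2 (y t.succ).2 := by
  unfold tPathProb at h
  have hprodnn : (0:ℝ) ≤ ∏ t : Fin T,
      (optKernel β πO ϑ (y t.castSucc).1 (y t.castSucc).2 (y t.succ).1
        * Q (y t.succ).1 (y t.castSucc).2 (y t.succ).2) :=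
    Finset.prod_nonneg fun t _ =>
      mul_nonneg (K_pos β πO ϑ hβ0 hβ1 hπO _ _ _).le (hQ _ _ _)
  have hd : 0 < d0 (y 0) := by
    rcases (hd0 (y 0)).lt_or_eq with h' | h'
    · exact h'
    · exfalso; rw [← h'] at h; simp at h
  refine ⟨hd, fun t => ?_⟩
  have hprod : (0:ℝ) < ∏ t : Fin T,
      (optKernel β πO ϑ (y t.castSucc).1 (y t.castSucc).2 (y t.succ).1
        * Q (y t.succ).1 (y t.castSucc).2 (y t.succ).2) := by
    rcases hprodnn.lt_or_eq with h' | h'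
    · exact h'
    · exfalso; rw [← h'] at h; simp at h
  rcases (hQ (y t.succ).1 (y t.castSucc).2 (y t.succ).2).lt_or_eq with h' | h'
  · exact h'
  · exfalso
    have : (∏ t : Fin T,
        (optKernel β πO ϑ (y t.castSucc).1 (y t.castSucc).2 (y t.succ).1
          * Q (y t.succ).1 (y t.castSucc).2 (y t.succ).2)) = 0 :=
      Finset.prod_eq_zero (Finset.mem_univ t) (by rw [← h', mul_zero])
    rw [this] at hprod; exact lt_irrefl _ hprod

lemma score_eq (hβ0 : ∀ o s ϑ, 0 < β o s ϑ) (hβ1 : ∀ o s ϑ, β o s ϑ < 1)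
    (hπO : ∀ s o, 0 < πO s o) (hβsmooth : ∀ o s, ContDiff ℝ 2 (β o s))
    (hQ : ∀ o s' s'', 0 ≤ Q o s' s'') (hd0 : ∀ p, 0 ≤ d0 p)
    (T : ℕ) (y : Fin (T + 1) → O × S) (h : 0 < tPathProb β πO Q d0 T ϑ y) (i : Fin n) :
    pd i (fun ϑ' => Real.log (tPathProb β πO Q d0 T ϑ' y)) ϑ = sc β πO ϑ i T y := by
  obtain ⟨hd, hQpos⟩ := prob_parts_pos β πO Q d0 ϑ hβ0 hβ1 hπO hQ hd0 T y h
  have hfun : (fun ϑ' => Real.log (tPathProb β πO Q d0 T ϑ' y))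
      = fun ϑ' => (Real.log (d0 (y 0))
            + ∑ t : Fin T, Real.log (Q (y t.succ).1 (y t.castSucc).2 (y t.succ).2))
          + ∑ t : Fin T,
              Real.log (optKernel β πO ϑ' (y t.castSucc).1 (y t.castSucc).2 (y t.succ).1) := by
    funext ϑ'
    unfold tPathProb
    rw [Real.log_mul hd.ne' (by
      exact (Finset.prod_pos fun t _ => mul_pos
        (K_pos β πO ϑ' hβ0 hβ1 hπO _ _ _) (hQpos t)).ne'),
      Real.log_prod (fun t _ =>
        (mul_pos (K_pos β πO ϑ' hβ0 hβ1 hπO _ _ _) (hQpos t)).ne')]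
    have : ∀ t : Fin T,
        Real.log (optKernel β πO ϑ' (y t.castSucc).1 (y t.castSucc).2 (y t.succ).1
            * Q (y t.succ).1 (y t.castSucc).2 (y t.succ).2)
          = Real.log (Q (y t.succ).1 (y t.castSucc).2 (y t.succ).2)
            + Real.log (optKernel β πO ϑ' (y t.castSucc).1 (y t.castSucc).2 (y t.succ).1) := by
      intro t
      rw [Real.log_mul (K_pos β πO ϑ' hβ0 hβ1 hπO _ _ _).ne' (hQpos t).ne']
      ring
    rw [Finset.sum_congr rfl fun t _ => this t, Finset.sum_add_distrib]
    ring
  rw [hfun, pd, fderiv_const_add]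
  have hsum : HasFDerivAt
      (fun ϑ' => ∑ t : Fin T,
        Real.log (optKernel β πO ϑ' (y t.castSucc).1 (y t.castSucc).2 (y t.succ).1))
      (∑ t : Fin T,
        (optKernel β πO ϑ (y t.castSucc).1 (y t.castSucc).2 (y t.succ).1)⁻¹
          • ((πO (y t.castSucc).2 (y t.succ).1
              - if (y t.succ).1 = (y t.castSucc).1 then 1 else 0)
            • fderiv ℝ (β (y t.castSucc).1 (y t.castSucc).2) ϑ)) ϑ :=
    HasFDerivAt.fun_sum fun t _ =>
      (hasFDerivAt_K β πO ϑ hβsmooth _ _ _).log (K_pos β πO ϑ hβ0 hβ1 hπO _ _ _).ne'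
  rw [hsum.fderiv]
  unfold sc
  rw [ContinuousLinearMap.sum_apply]
  refine Finset.sum_congr rfl fun t _ => ?_
  simp only [ContinuousLinearMap.coe_smul', Pi.smul_apply, smul_eq_mul, pd]
  ring
lemma sum_snoc (T : ℕ) (f : (Fin (T + 1 + 1) → O × S) → ℝ) :
    ∑ y : Fin (T + 1 + 1) → O × S, f y
      = ∑ y' : Fin (T + 1) → O × S, ∑ p : O × S, f (Fin.snoc y' p) := by
  rw [← Equiv.sum_comp (Fin.snocEquiv (fun _ => O × S)) f, Fintype.sum_prod_type,
    Finset.sum_comm]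
  rfl

lemma prob_snoc (T : ℕ) (y' : Fin (T + 1) → O × S) (p : O × S) :
    tPathProb β πO Q d0 (T + 1) ϑ (Fin.snoc y' p)
      = tPathProb β πO Q d0 T ϑ y'
          * (optKernel β πO ϑ (y' (Fin.last T)).1 (y' (Fin.last T)).2 p.1
              * Q p.1 (y' (Fin.last T)).2 p.2) := by
  unfold tPathProb
  rw [Fin.prod_univ_castSucc]
  have h0 : (Fin.snoc y' p : Fin (T + 1 + 1) → O × S) 0 = y' 0 := by
    rw [← Fin.castSucc_zero', Fin.snoc_castSucc]
  rw [h0]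
  simp only [Fin.succ_castSucc, Fin.snoc_castSucc, Fin.succ_last, Fin.snoc_last]
  ring

lemma sc_snoc (T : ℕ) (i : Fin n) (y' : Fin (T + 1) → O × S) (p : O × S) :
    sc β πO ϑ i (T + 1) (Fin.snoc y' p)
      = sc β πO ϑ i T y'
          + (πO (y' (Fin.last T)).2 p.1 - if p.1 = (y' (Fin.last T)).1 then 1 else 0)
              * pd i (β (y' (Fin.last T)).1 (y' (Fin.last T)).2) ϑ
              / optKernel β πO ϑ (y' (Fin.last T)).1 (y' (Fin.last T)).2 p.1 := by
  unfold sc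
  rw [Fin.sum_univ_castSucc]
  simp only [Fin.succ_castSucc, Fin.snoc_castSucc, Fin.succ_last, Fin.snoc_last]

lemma KQ_sum (hπOsum : ∀ s, ∑ o, πO s o = 1) (hQsum : ∀ o s', ∑ s'', Q o s' s'' = 1)
    (o : O) (s' : S) :
    ∑ p : O × S, optKernel β πO ϑ o s' p.1 * Q p.1 s' p.2 = 1 := by
  rw [Fintype.sum_prod_type]
  have h : ∀ o' : O, ∑ s'' : S, optKernel β πO ϑ o s' o' * Q o' s' s''
      = optKernel β πO ϑ o s' o' := by
    intro o'; rw [← Finset.mul_sum, hQsum, mul_one]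
  rw [Finset.sum_congr rfl fun o' _ => h o']
  exact K_sum β πO ϑ hπOsum o s'

lemma marg_snoc (hπOsum : ∀ s, ∑ o, πO s o = 1) (hQsum : ∀ o s', ∑ s'', Q o s' s'' = 1)
    (T : ℕ) (t : Fin (T + 1)) (s' : S) (o : O) :
    tMarginalIn β πO Q d0 (T + 1) ϑ t.castSucc s' o
      = tMarginalIn β πO Q d0 T ϑ t s' o := by
  unfold tMarginalIn
  rw [Finset.sum_filter, Finset.sum_filter, sum_snoc]
  refine Finset.sum_congr rfl fun y' _ => ?_
  simp only [Fin.snoc_castSucc]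
  split_ifs with h
  · have : ∀ p : O × S, tPathProb β πO Q d0 (T + 1) ϑ (Fin.snoc y' p)
        = tPathProb β πO Q d0 T ϑ y'
            * (optKernel β πO ϑ (y' (Fin.last T)).1 (y' (Fin.last T)).2 p.1
                * Q p.1 (y' (Fin.last T)).2 p.2) := fun p => prob_snoc β πO Q d0 ϑ T y' p
    rw [Finset.sum_congr rfl fun p _ => this p, ← Finset.mul_sum,
      KQ_sum β πO Q ϑ hπOsum hQsum, mul_one]
  · simp

lemma sum_fiber (T : ℕ) (t : Fin (T + 1)) (g : O × S → ℝ) :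
    ∑ s', ∑ o, tMarginalIn β πO Q d0 T ϑ t s' o * g (o, s')
      = ∑ y : Fin (T + 1) → O × S, tPathProb β πO Q d0 T ϑ y * g (y t) := by
  unfold tMarginalIn
  have h1 : ∀ (s' : S) (o : O),
      (∑ y ∈ Finset.univ.filter (fun y : Fin (T + 1) → O × S => y t = (o, s')),
          tPathProb β πO Q d0 T ϑ y) * g (o, s')
        = ∑ y : Fin (T + 1) → O × S,
            if y t = (o, s') then tPathProb β πO Q d0 T ϑ y * g (o, s') else 0 := by
    intro s' o
    rw [Finset.sum_mul, Finset.sum_filter]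
  rw [Finset.sum_congr rfl fun s' _ => Finset.sum_congr rfl fun o _ => h1 s' o]
  have h2 : ∀ y : Fin (T + 1) → O × S,
      ∑ s', ∑ o, (if y t = (o, s') then tPathProb β πO Q d0 T ϑ y * g (o, s') else 0)
        = tPathProb β πO Q d0 T ϑ y * g (y t) := by
    intro y
    simp [Prod.ext_iff, ite_and, Finset.sum_ite_eq, Finset.sum_ite_eq']
  calc ∑ s', ∑ o, ∑ y : Fin (T + 1) → O × S,
        (if y t = (o, s') then tPathProb β πO Q d0 T ϑ y * g (o, s') else 0)
      = ∑ s', ∑ y : Fin (T + 1) → O × S, ∑ o,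
          (if y t = (o, s') then tPathProb β πO Q d0 T ϑ y * g (o, s') else 0) :=
        Finset.sum_congr rfl fun s' _ => Finset.sum_comm
    _ = ∑ y : Fin (T + 1) → O × S, ∑ s', ∑ o,
          (if y t = (o, s') then tPathProb β πO Q d0 T ϑ y * g (o, s') else 0) :=
        Finset.sum_comm
    _ = ∑ y : Fin (T + 1) → O × S, tPathProb β πO Q d0 T ϑ y * g (y t) :=
        Finset.sum_congr rfl fun y _ => h2 y
lemma key_id (hβ0 : ∀ o s ϑ, 0 < β o s ϑ) (hβ1 : ∀ o s ϑ, β o s ϑ < 1)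
    (hπO : ∀ s o, 0 < πO s o) (hπOsum : ∀ s, ∑ o, πO s o = 1) (o : O) (s' : S) :
    ∑ o', (πO s' o' - if o' = o then 1 else 0) ^ 2 / optKernel β πO ϑ o s' o'
      = (1 - πO s' o) / (β o s' ϑ * (1 - β o s' ϑ + β o s' ϑ * πO s' o)) := by
  have hb := hβ0 o s' ϑ
  have hb1 := hβ1 o s' ϑ
  have hβ' := betac_pos β πO ϑ hβ0 hβ1 hπO o s'
  rw [← Finset.sum_erase_add _ _ (Finset.mem_univ o)]
  have h1 : ∑ o' ∈ Finset.univ.erase o,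
      (πO s' o' - if o' = o then 1 else 0) ^ 2 / optKernel β πO ϑ o s' o'
        = (∑ o' ∈ Finset.univ.erase o, πO s' o') / β o s' ϑ := by
    rw [Finset.sum_div]
    refine Finset.sum_congr rfl fun o' ho' => ?_
    have hne : o' ≠ o := Finset.ne_of_mem_erase ho'
    have hp := hπO s' o'
    simp only [optKernel, if_neg hne]
    rw [mul_zero, zero_add]
    field_simp
    ring
  have h2 : ∑ o' ∈ Finset.univ.erase o, πO s' o' = 1 - πO s' o := by
    have := Finset.sum_erase_add Finset.univ (πO s') (Finset.mem_univ o)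
    rw [hπOsum s'] at this
    linarith
  rw [h1, h2]
  have h3 : optKernel β πO ϑ o s' o = 1 - β o s' ϑ + β o s' ϑ * πO s' o := by
    simp [optKernel]
  rw [h3, if_pos rfl]
  have hne := hβ'.ne'
  have hbne := hb.ne'
  rw [div_add_div _ _ hbne hne, div_eq_div_iff (mul_ne_zero hbne hne) (mul_ne_zero hbne hne)]
  ring

lemma step_sum (hβ0 : ∀ o s ϑ, 0 < β o s ϑ) (hβ1 : ∀ o s ϑ, β o s ϑ < 1)
    (hπO : ∀ s o, 0 < πO s o) (hπOsum : ∀ s, ∑ o, πO s o = 1)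
    (hQsum : ∀ o s', ∑ s'', Q o s' s'' = 1) (o : O) (s' : S) (A B Di Dj : ℝ) :
    ∑ p : O × S, (optKernel β πO ϑ o s' p.1 * Q p.1 s' p.2)
        * ((A + (πO s' p.1 - if p.1 = o then 1 else 0) * Di / optKernel β πO ϑ o s' p.1)
          * (B + (πO s' p.1 - if p.1 = o then 1 else 0) * Dj / optKernel β πO ϑ o s' p.1))
      = A * B - (Di / β o s' ϑ)
          * ((πO s' o - 1) * Dj / (1 - β o s' ϑ + β o s' ϑ * πO s' o)) := by
  rw [Fintype.sum_prod_type]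
  have h1 : ∀ o' : O, ∑ s'' : S, (optKernel β πO ϑ o s' o' * Q o' s' s'')
        * ((A + (πO s' o' - if o' = o then 1 else 0) * Di / optKernel β πO ϑ o s' o')
          * (B + (πO s' o' - if o' = o then 1 else 0) * Dj / optKernel β πO ϑ o s' o'))
      = optKernel β πO ϑ o s' o'
          * ((A + (πO s' o' - if o' = o then 1 else 0) * Di / optKernel β πO ϑ o s' o')
            * (B + (πO s' o' - if o' = o then 1 else 0) * Dj / optKernel β πO ϑ o s' o')) := by
    intro o'
    have : ∀ s'' : S, (optKernel β πO ϑ o s' o' * Q o' s' s'')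
          * ((A + (πO s' o' - if o' = o then 1 else 0) * Di / optKernel β πO ϑ o s' o')
            * (B + (πO s' o' - if o' = o then 1 else 0) * Dj / optKernel β πO ϑ o s' o'))
        = Q o' s' s'' * (optKernel β πO ϑ o s' o'
            * ((A + (πO s' o' - if o' = o then 1 else 0) * Di / optKernel β πO ϑ o s' o')
              * (B + (πO s' o' - if o' = o then 1 else 0) * Dj
                  / optKernel β πO ϑ o s' o'))) := fun s'' => by ring
    rw [Finset.sum_congr rfl fun s'' _ => this s'', ← Finset.sum_mul, hQsum, one_mul]
  rw [Finset.sum_congr rfl fun o' _ => h1 o']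
  have expand : ∀ o' : O, optKernel β πO ϑ o s' o'
        * ((A + (πO s' o' - if o' = o then 1 else 0) * Di / optKernel β πO ϑ o s' o')
          * (B + (πO s' o' - if o' = o then 1 else 0) * Dj / optKernel β πO ϑ o s' o'))
      = optKernel β πO ϑ o s' o' * (A * B)
        + (πO s' o' - if o' = o then 1 else 0) * (A * Dj)
        + (πO s' o' - if o' = o then 1 else 0) * (B * Di)
        + ((πO s' o' - if o' = o then 1 else 0) ^ 2 / optKernel β πO ϑ o s' o')
            * (Di * Dj) := by
    intro o'
    have hK := (K_pos β πO ϑ hβ0 hβ1 hπO o s' o').ne'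
    field_simp
    ring
  rw [Finset.sum_congr rfl fun o' _ => expand o']
  rw [Finset.sum_add_distrib, Finset.sum_add_distrib, Finset.sum_add_distrib,
    ← Finset.sum_mul, ← Finset.sum_mul, ← Finset.sum_mul, ← Finset.sum_mul,
    K_sum β πO ϑ hπOsum o s', key_id β πO ϑ hβ0 hβ1 hπO hπOsum o s']
  have hc : ∑ o' : O, (πO s' o' - if o' = o then 1 else 0) = 0 := by
    rw [Finset.sum_sub_distrib, hπOsum]
    simp
  rw [hc]
  have hb := (hβ0 o s' ϑ).ne'
  have hβ' := (betac_pos β πO ϑ hβ0 hβ1 hπO o s').ne'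
  field_simp
  ring
lemma F_eq (hβ0 : ∀ o s ϑ, 0 < β o s ϑ) (hβ1 : ∀ o s ϑ, β o s ϑ < 1)
    (hπO : ∀ s o, 0 < πO s o) (hπOsum : ∀ s, ∑ o, πO s o = 1)
    (hQsum : ∀ o s', ∑ s'', Q o s' s'' = 1) (i j : Fin n) (T : ℕ) :
    ∑ y : Fin (T + 1) → O × S,
        tPathProb β πO Q d0 T ϑ y * sc β πO ϑ i T y * sc β πO ϑ j T y
      = -∑ t : Fin T, ∑ s', ∑ o,
          tMarginalIn β πO Q d0 T ϑ t.castSucc s' o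
            * (pd i (β o s') ϑ / β o s' ϑ)
            * ((πO s' o - 1) * pd j (β o s') ϑ
                / (1 - β o s' ϑ + β o s' ϑ * πO s' o)) := by
  induction T with
  | zero => simp [sc]
  | succ T ih =>
    rw [sum_snoc]
    have hinner : ∀ y' : Fin (T + 1) → O × S,
        ∑ p : O × S,
            tPathProb β πO Q d0 (T + 1) ϑ (Fin.snoc y' p)
              * sc β πO ϑ i (T + 1) (Fin.snoc y' p)
              * sc β πO ϑ j (T + 1) (Fin.snoc y' p)
          = tPathProb β πO Q d0 T ϑ y'
              * (sc β πO ϑ i T y' * sc β πO ϑ j T y')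
            - tPathProb β πO Q d0 T ϑ y'
              * ((pd i (β (y' (Fin.last T)).1 (y' (Fin.last T)).2) ϑ
                    / β (y' (Fin.last T)).1 (y' (Fin.last T)).2 ϑ)
                * ((πO (y' (Fin.last T)).2 (y' (Fin.last T)).1 - 1)
                    * pd j (β (y' (Fin.last T)).1 (y' (Fin.last T)).2) ϑ
                    / (1 - β (y' (Fin.last T)).1 (y' (Fin.last T)).2 ϑ
                        + β (y' (Fin.last T)).1 (y' (Fin.last T)).2 ϑ
                          * πO (y' (Fin.last T)).2 (y' (Fin.last T)).1))) := by
      intro y'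
      have hstep := step_sum β πO Q ϑ hβ0 hβ1 hπO hπOsum hQsum
        (y' (Fin.last T)).1 (y' (Fin.last T)).2
        (sc β πO ϑ i T y') (sc β πO ϑ j T y')
        (pd i (β (y' (Fin.last T)).1 (y' (Fin.last T)).2) ϑ)
        (pd j (β (y' (Fin.last T)).1 (y' (Fin.last T)).2) ϑ)
      calc ∑ p : O × S,
            tPathProb β πO Q d0 (T + 1) ϑ (Fin.snoc y' p)
              * sc β πO ϑ i (T + 1) (Fin.snoc y' p)
              * sc β πO ϑ j (T + 1) (Fin.snoc y' p)
          = tPathProb β πO Q d0 T ϑ y' * ∑ p : O × S,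
              (optKernel β πO ϑ (y' (Fin.last T)).1 (y' (Fin.last T)).2 p.1
                  * Q p.1 (y' (Fin.last T)).2 p.2)
                * ((sc β πO ϑ i T y'
                      + (πO (y' (Fin.last T)).2 p.1
                          - if p.1 = (y' (Fin.last T)).1 then 1 else 0)
                        * pd i (β (y' (Fin.last T)).1 (y' (Fin.last T)).2) ϑ
                        / optKernel β πO ϑ (y' (Fin.last T)).1 (y' (Fin.last T)).2 p.1)
                  * (sc β πO ϑ j T y'
                      + (πO (y' (Fin.last T)).2 p.1
                          - if p.1 = (y' (Fin.last T)).1 then 1 else 0)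
                        * pd j (β (y' (Fin.last T)).1 (y' (Fin.last T)).2) ϑ
                        / optKernel β πO ϑ (y' (Fin.last T)).1 (y' (Fin.last T)).2 p.1)) := by
            rw [Finset.mul_sum]
            refine Finset.sum_congr rfl fun p _ => ?_
            rw [prob_snoc β πO Q d0 ϑ T y' p, sc_snoc β πO ϑ T i y' p,
              sc_snoc β πO ϑ T j y' p]
            ring
        _ = _ := by rw [hstep]; ring
    rw [Finset.sum_congr rfl fun y' _ => hinner y', Finset.sum_sub_distrib]
    have hA : ∑ y' : Fin (T + 1) → O × S,
        tPathProb β πO Q d0 T ϑ y' * (sc β πO ϑ i T y' * sc β πO ϑ j T y')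
          = ∑ y' : Fin (T + 1) → O × S,
              tPathProb β πO Q d0 T ϑ y' * sc β πO ϑ i T y' * sc β πO ϑ j T y' :=
      Finset.sum_congr rfl fun y' _ => (mul_assoc _ _ _).symm
    rw [hA, ih]
    have hB := sum_fiber β πO Q d0 ϑ T (Fin.last T)
      (fun p => (pd i (β p.1 p.2) ϑ / β p.1 p.2 ϑ)
        * ((πO p.2 p.1 - 1) * pd j (β p.1 p.2) ϑ
            / (1 - β p.1 p.2 ϑ + β p.1 p.2 ϑ * πO p.2 p.1)))
    rw [← hB]
    conv_rhs => rw [Fin.sum_univ_castSucc]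
    simp only [marg_snoc β πO Q d0 ϑ hπOsum hQsum T]
    have hassoc : ∑ s', ∑ o,
        tMarginalIn β πO Q d0 T ϑ (Fin.last T) s' o
          * ((pd i (β o s') ϑ / β o s' ϑ)
            * ((πO s' o - 1) * pd j (β o s') ϑ
                / (1 - β o s' ϑ + β o s' ϑ * πO s' o)))
          = ∑ s', ∑ o,
              tMarginalIn β πO Q d0 T ϑ (Fin.last T) s' o
                * (pd i (β o s') ϑ / β o s' ϑ)
                * ((πO s' o - 1) * pd j (β o s') ϑ
                    / (1 - β o s' ϑ + β o s' ϑ * πO s' o)) :=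
      Finset.sum_congr rfl fun s' _ =>
        Finset.sum_congr rfl fun o _ => (mul_assoc _ _ _).symm
    rw [hassoc]
    ring
end Aux

/-- Finite-horizon decomposition of the state-option transition path Fisher information
matrix: it equals minus the sum over time steps of the marginal-weighted outer products
of the termination score `∂ ln β` and the continuation score `∂ ln β'`, where
`β'(o,s',ϑ) = 1 − β(o,s',ϑ) + β(o,s',ϑ)·π_O(s',o)`. -/
theorem transition_path_fisher_decomposition
    {S O : Type*} [Fintype S] [Fintype O] [DecidableEq O] [DecidableEq S]
    [Nonempty S] [Nonempty O] {n : ℕ}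
    (β : O → S → (Fin n → ℝ) → ℝ)
    (hβ0 : ∀ o s ϑ, 0 < β o s ϑ) (hβ1 : ∀ o s ϑ, β o s ϑ < 1)
    (hβsmooth : ∀ o s, ContDiff ℝ 2 (β o s))
    (πO : S → O → ℝ) (hπO : ∀ s o, 0 < πO s o) (hπOsum : ∀ s, ∑ o, πO s o = 1)
    (Q : O → S → S → ℝ) (hQ : ∀ o s' s'', 0 ≤ Q o s' s'')
    (hQsum : ∀ o s', ∑ s'', Q o s' s'' = 1)
    (d0 : O × S → ℝ) (hd0 : ∀ p, 0 ≤ d0 p) (hd0sum : ∑ p, d0 p = 1)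
    (T : ℕ) (ϑ : Fin n → ℝ) (i j : Fin n) :
    tPathFisher β πO Q d0 T ϑ i j
      = -∑ t : Fin T, ∑ s', ∑ o,
          tMarginalIn β πO Q d0 T ϑ t.castSucc s' o
            * pd i (fun ϑ' => Real.log (β o s' ϑ')) ϑ
            * pd j (fun ϑ' => Real.log (1 - β o s' ϑ' + β o s' ϑ' * πO s' o)) ϑ := by
  unfold tPathFisher
  have h1 : ∀ y ∈ Finset.univ.filter (fun y : Fin (T + 1) → O × S =>
      0 < tPathProb β πO Q d0 T ϑ y),
      tPathProb β πO Q d0 T ϑ y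
          * pd i (fun ϑ' => Real.log (tPathProb β πO Q d0 T ϑ' y)) ϑ
          * pd j (fun ϑ' => Real.log (tPathProb β πO Q d0 T ϑ' y)) ϑ
        = tPathProb β πO Q d0 T ϑ y * sc β πO ϑ i T y * sc β πO ϑ j T y := by
    intro y hy
    have hpos := (Finset.mem_filter.mp hy).2
    rw [score_eq β πO Q d0 ϑ hβ0 hβ1 hπO hβsmooth hQ hd0 T y hpos i,
      score_eq β πO Q d0 ϑ hβ0 hβ1 hπO hβsmooth hQ hd0 T y hpos j]
  rw [Finset.sum_congr rfl h1]
  rw [Finset.sum_subset (Finset.filter_subset _ _) (fun y _ hy => by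
    have hnn := prob_nonneg β πO Q d0 ϑ hβ0 hβ1 hπO hQ hd0 T y
    have : tPathProb β πO Q d0 T ϑ y = 0 := by
      have hnotpos : ¬ 0 < tPathProb β πO Q d0 T ϑ y := by
        simpa using hy
      exact le_antisymm (not_lt.mp hnotpos) hnn
    rw [this, zero_mul, zero_mul])]
  rw [F_eq β πO Q d0 ϑ hβ0 hβ1 hπO hπOsum hQsum i j T]
  simp only [pd_logβ β ϑ hβ0 hβsmooth, pd_logβc β πO ϑ hβ0 hβ1 hπO hβsmooth]
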